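/- Let δ ∈ (0,1), w > 0, ẇ < 0, ẅ < 0, and define w(α) = w − ẇ sin α + ẅ(1 − cos α), r = √(ẇ² + ẅ²), and β = arcsin(−ẅ/r). (i) If (1−δ)w + ẅ ≥ 0, then w(α) ≥ δw for all α ∈ [0, π/2]. (ii) If (1−δ)w + ẅ < 0, then −((1−δ)w + ẅ)/r ∈ (0, 1] and w(α) ≥ δw for every α ∈ [0, π/2] with α ≤ π − arcsin(−((1−δ)w + ẅ)/r) − β. -/
import Mathlib

lemma sin_ge_of_between (x θ : ℝ) (hx0 : -1 ≤ x) (hx1 : x ≤ 1)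
    (h1 : Real.arcsin x ≤ θ) (h2 : θ ≤ Real.pi - Real.arcsin x) :
    x ≤ Real.sin θ := by
  have ha1 := Real.neg_pi_div_two_le_arcsin x
  have ha2 := Real.arcsin_le_pi_div_two x
  have hpi := Real.pi_pos
  rcases le_or_gt θ (Real.pi / 2) with h | h
  · calc x = Real.sin (Real.arcsin x) := (Real.sin_arcsin hx0 hx1).symm
      _ ≤ Real.sin θ := by
        apply Real.strictMonoOn_sin.monotoneOn ⟨ha1, ha2⟩ ⟨by linarith, h⟩ h1
  · rw [← Real.sin_pi_sub θ]
    calc x = Real.sin (Real.arcsin x) := (Real.sin_arcsin hx0 hx1).symm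
      _ ≤ Real.sin (Real.pi - θ) := by
        apply Real.strictMonoOn_sin.monotoneOn ⟨ha1, ha2⟩
          ⟨by linarith, by linarith⟩ (by linarith)

/-- Case 5 (`ẇ < 0`, `ẅ < 0`) of the largest step angle computation: with
`r = √(ẇ² + ẅ²)` and `β = arcsin(−ẅ/r)`, (i) if `(1−δ)w + ẅ ≥ 0` then
`w(α) ≥ δw` on `[0, π/2]`; (ii) if `(1−δ)w + ẅ < 0` then
`−((1−δ)w + ẅ)/r ∈ (0, 1]` and `w(α) ≥ δw` for every `α ∈ [0, π/2]` with
`α ≤ π − arcsin(−((1−δ)w + ẅ)/r) − β`. -/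
theorem step_angle_case5 (δ w wdot wddot : ℝ)
    (hδ : δ ∈ Set.Ioo (0 : ℝ) 1) (hw : 0 < w)
    (hwdot : wdot < 0) (hwddot : wddot < 0) :
    let r := Real.sqrt (wdot ^ 2 + wddot ^ 2)
    let β := Real.arcsin (-wddot / r)
    ((0 ≤ (1 - δ) * w + wddot →
        ∀ α ∈ Set.Icc (0 : ℝ) (Real.pi / 2),
          δ * w ≤ w - wdot * Real.sin α + wddot * (1 - Real.cos α)) ∧
     ((1 - δ) * w + wddot < 0 →
        -((1 - δ) * w + wddot) / r ∈ Set.Ioc (0 : ℝ) 1 ∧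
        ∀ α ∈ Set.Icc (0 : ℝ) (Real.pi / 2),
          α ≤ Real.pi - Real.arcsin (-((1 - δ) * w + wddot) / r) - β →
          δ * w ≤ w - wdot * Real.sin α + wddot * (1 - Real.cos α))) := by
  obtain ⟨hδ0, hδ1⟩ := hδ
  intro r β
  have hr : 0 < r := Real.sqrt_pos.mpr (by nlinarith)
  have hr2 : r ^ 2 = wdot ^ 2 + wddot ^ 2 := Real.sq_sqrt (by positivity)
  have hwdr : -wddot ≤ r := by nlinarith
  have hwdot_r : -wdot ≤ r := by nlinarith
  have hmem0 : (-1 : ℝ) ≤ -wddot / r := by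
    rw [le_div_iff₀ hr]; nlinarith
  have hmem1 : -wddot / r ≤ 1 := by
    rw [div_le_one hr]; linarith
  have hsβ : Real.sin β = -wddot / r := Real.sin_arcsin hmem0 hmem1
  have hcβ : Real.cos β = -wdot / r := by
    rw [show β = Real.arcsin (-wddot / r) from rfl, Real.cos_arcsin]
    rw [show 1 - (-wddot / r) ^ 2 = (-wdot / r) ^ 2 by
      field_simp; nlinarith]
    exact Real.sqrt_sq (div_nonneg (by linarith) hr.le)
  have hβ0 : 0 ≤ β := Real.arcsin_nonneg.mpr (div_nonneg (by linarith) hr.le)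
  have hβ2 : β ≤ Real.pi / 2 := Real.arcsin_le_pi_div_two _
  -- key identity
  have key : ∀ α : ℝ, w - wdot * Real.sin α + wddot * (1 - Real.cos α)
      = (w + wddot) + r * Real.sin (α + β) := by
    intro α
    rw [Real.sin_add, hsβ, hcβ]
    field_simp
    ring
  constructor
  · intro h α ⟨hα0, hα2⟩
    rw [key α]
    have hs : 0 ≤ Real.sin (α + β) :=
      Real.sin_nonneg_of_nonneg_of_le_pi (by linarith)
        (by have := Real.pi_pos; linarith)
    nlinarith
  · intro h
    set c : ℝ := -((1 - δ) * w + wddot) with hc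
    have hc0 : 0 < c := by linarith
    have hcr : c ≤ r := by
      have : c < -wddot := by nlinarith
      linarith
    have hcr1 : c / r ≤ 1 := (div_le_one hr).mpr hcr
    have hcr0 : 0 < c / r := div_pos hc0 hr
    refine ⟨⟨hcr0, hcr1⟩, ?_⟩
    intro α ⟨hα0, hα2⟩ hαle
    rw [key α]
    have harc : Real.arcsin (c / r) ≤ β := by
      apply Real.monotone_arcsin
      rw [div_le_div_iff₀ hr hr]
      nlinarith [mul_pos (mul_pos (by linarith : (0:ℝ) < 1 - δ) hw) hr]
    have hsin : c / r ≤ Real.sin (α + β) := by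
      apply sin_ge_of_between _ _ (by linarith) hcr1 (by linarith) (by linarith)
    have : c ≤ r * Real.sin (α + β) := by
      calc c = r * (c / r) := by field_simp
        _ ≤ r * Real.sin (α + β) := by nlinarith
    linarith
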